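/- Let D be an invertible real m×m matrix, let B : ℝ → M_m(ℝ) be differentiable, let B₀ : ℝ → M_m(ℝ) be arbitrary, and let U : ℝ → M_m(ℝ) be twice differentiable with U′(x) = −(1/2)D⁻¹B(x)U(x) for all x. Then for every twice differentiable η : ℝ → ℝ^m, the function h = Uη satisfies the identity D h″(x) + B₀(x)h(x) + B(x)h′(x) = D U(x) η″(x) + (B₀(x) − (1/2)B′(x) − (1/4)B(x)D⁻¹B(x)) U(x) η(x) for all x. (the change-of-variable computation of Section 3) -/

import Mathlib

open Matrix

attribute [local instance] Matrix.normedAddCommGroup Matrix.normedSpace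

theorem hasDerivAt_mulVec' {m : ℕ} {A : ℝ → Matrix (Fin m) (Fin m) ℝ}
    {A' : Matrix (Fin m) (Fin m) ℝ} {v : ℝ → Fin m → ℝ} {v' : Fin m → ℝ} {x : ℝ}
    (hA : HasDerivAt A A' x) (hv : HasDerivAt v v' x) :
    HasDerivAt (fun x => (A x).mulVec (v x)) (A'.mulVec (v x) + (A x).mulVec v') x := by
  rw [hasDerivAt_pi]
  intro i
  have hAij : ∀ j, HasDerivAt (fun x => A x i j) (A' i j) x := fun j =>
    hasDerivAt_pi.mp (hasDerivAt_pi.mp hA i) j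
  have hvj : ∀ j, HasDerivAt (fun x => v x j) (v' j) x := fun j => hasDerivAt_pi.mp hv j
  have := HasDerivAt.fun_sum (u := Finset.univ)
    (fun j _ => ((hAij j).mul (hvj j)))
  simpa [Matrix.mulVec, dotProduct, Finset.sum_add_distrib, mul_comm] using this

/-- The change-of-variable computation of Section 3: if `U′ = −(1/2)D⁻¹B(x)U`, then for
every twice differentiable `η` the function `h = Uη` satisfies
`D h″ + B₀ h + B h′ = D U η″ + (B₀ − (1/2)B′ − (1/4)B D⁻¹ B) U η`. -/
theorem stmt6 (m : ℕ) (hm : 1 ≤ m)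
    (D : Matrix (Fin m) (Fin m) ℝ) (hD : IsUnit D.det)
    (B B' B₀ : ℝ → Matrix (Fin m) (Fin m) ℝ)
    (hB : ∀ x : ℝ, HasDerivAt B (B' x) x)
    (U : ℝ → Matrix (Fin m) (Fin m) ℝ)
    (hU : ∀ x : ℝ, HasDerivAt U (-(1/2 : ℝ) • (D⁻¹ * B x * U x)) x)
    (η η' η'' : ℝ → Fin m → ℝ)
    (hη : ∀ x : ℝ, HasDerivAt η (η' x) x) (hη' : ∀ x : ℝ, HasDerivAt η' (η'' x) x)
    (h h' h'' : ℝ → Fin m → ℝ)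
    (hh : h = fun x => (U x).mulVec (η x))
    (hh' : ∀ x : ℝ, HasDerivAt h (h' x) x) (hh'' : ∀ x : ℝ, HasDerivAt h' (h'' x) x) :
    ∀ x : ℝ,
      D.mulVec (h'' x) + (B₀ x).mulVec (h x) + (B x).mulVec (h' x) =
        (D * U x).mulVec (η'' x) +
          ((B₀ x - (1/2 : ℝ) • B' x - (1/4 : ℝ) • (B x * D⁻¹ * B x)) * U x).mulVec (η x) := by
  -- the function g = Uη and its derivative
  set g' : ℝ → Fin m → ℝ := fun x =>
    (-(1/2 : ℝ) • (D⁻¹ * B x * U x)).mulVec (η x) + (U x).mulVec (η' x) with hg'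
  have hg : ∀ x : ℝ, HasDerivAt (fun x => (U x).mulVec (η x)) (g' x) x := fun x =>
    hasDerivAt_mulVec' (hU x) (hη x)
  have key1 : ∀ x : ℝ, h' x = g' x := by
    intro x
    exact (hh' x).unique (by rw [hh]; exact hg x)
  have hh'fun : h' = g' := funext key1
  -- second derivative
  have key2 : ∀ x : ℝ, h'' x =
      -(1/2 : ℝ) • (D⁻¹.mulVec ((B' x).mulVec ((U x).mulVec (η x)) + (B x).mulVec (g' x)))
        + ((-(1/2 : ℝ) • (D⁻¹ * B x * U x)).mulVec (η' x) + (U x).mulVec (η'' x)) := by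
    intro x
    refine (hh'' x).unique ?_
    rw [hh'fun]
    have h1 : HasDerivAt (fun x => (B x).mulVec ((U x).mulVec (η x)))
        ((B' x).mulVec ((U x).mulVec (η x)) + (B x).mulVec (g' x)) x :=
      hasDerivAt_mulVec' (hB x) (hg x)
    have h2 : HasDerivAt (fun x => D⁻¹.mulVec ((B x).mulVec ((U x).mulVec (η x))))
        (D⁻¹.mulVec ((B' x).mulVec ((U x).mulVec (η x)) + (B x).mulVec (g' x))) x := by
      have := hasDerivAt_mulVec' (hasDerivAt_const x D⁻¹) h1
      simpa using this
    have h3 : HasDerivAt (fun x => (U x).mulVec (η' x))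
        ((-(1/2 : ℝ) • (D⁻¹ * B x * U x)).mulVec (η' x) + (U x).mulVec (η'' x)) x :=
      hasDerivAt_mulVec' (hU x) (hη' x)
    have h4 := (h2.const_smul (-(1/2 : ℝ))).add h3
    have heq : g' = fun x =>
        -(1/2 : ℝ) • D⁻¹.mulVec ((B x).mulVec ((U x).mulVec (η x))) + (U x).mulVec (η' x) := by
      funext x
      simp [hg', Matrix.smul_mulVec, Matrix.mulVec_mulVec, Matrix.mul_assoc,
        Matrix.neg_mulVec]
    rw [heq]
    simpa only [heq, Pi.add_def, Pi.smul_def] using h4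
  intro x
  rw [key1, key2, hh]
  have hDDinv : D * D⁻¹ = 1 := Matrix.mul_nonsing_inv D hD
  simp only [hg', Matrix.smul_mulVec, Matrix.mulVec_add, Matrix.add_mulVec,
    Matrix.sub_mulVec, Matrix.mulVec_smul, smul_add, Matrix.mulVec_mulVec,
    Matrix.neg_mulVec, Matrix.mulVec_neg, neg_smul, smul_neg, smul_smul, neg_neg,
    Matrix.sub_mul, Matrix.smul_mul,
    ← Matrix.mul_assoc, hDDinv, Matrix.one_mul]
  module
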